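/- Let 2 ≤ t ≤ k, let Q = Z_{q_1} × ⋯ × Z_{q_n} with all q_i ≥ 2, and let q ≥ 2. If there exists a large set of mixed Steiner systems MS(t,k, Q × Z_q), where Q × Z_q is the mixed alphabet obtained by appending one coordinate over Z_q to Q, then there exists a large set of mixed Steiner systems MS(t−1, k−1, Q). -/

import Mathlib

/-- A mixed Steiner system MS(t,k,Q) over the mixed alphabet described by `q : ι → ℕ`
(words are functions `x : ι → ℕ` with `x i < q i`): a set `C` of words of Hamming
weight `k` such that every word of Hamming weight `t` is at Hamming distance exactly
`k - t` from exactly one codeword, and distinct codewords are at Hamming distance at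
least `2(k-t)+1`. -/
def IsMixedSteiner {ι : Type*} [Fintype ι] [DecidableEq ι] (q : ι → ℕ) (t k : ℕ)
    (C : Set (ι → ℕ)) : Prop :=
  (∀ c ∈ C, (∀ i, c i < q i) ∧ hammingNorm c = k) ∧
  (∀ x : ι → ℕ, (∀ i, x i < q i) → hammingNorm x = t →
    ∃! c, c ∈ C ∧ hammingDist x c = k - t) ∧
  (∀ c ∈ C, ∀ c' ∈ C, c ≠ c' → 2 * (k - t) + 1 ≤ hammingDist c c')

/-- A large set of mixed Steiner systems MS(t,k,Q): a collection of pairwise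
disjoint mixed Steiner systems MS(t,k,Q) whose union is the set of all words of
Hamming weight `k` over the mixed alphabet. -/
def IsLargeSet {ι : Type*} [Fintype ι] [DecidableEq ι] (q : ι → ℕ) (t k : ℕ)
    (L : Set (Set (ι → ℕ))) : Prop :=
  (∀ C ∈ L, IsMixedSteiner q t k C) ∧
  L.PairwiseDisjoint id ∧
  ⋃₀ L = {x : ι → ℕ | (∀ i, x i < q i) ∧ hammingNorm x = k}

section Aux

variable {α β : Type*} [Fintype α] [Fintype β] [DecidableEq α] [DecidableEq β]

lemma filter_sum_card (p : α ⊕ β → Prop) [DecidablePred p] :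
    (Finset.univ.filter p).card
      = (Finset.univ.filter fun a => p (Sum.inl a)).card
        + (Finset.univ.filter fun b => p (Sum.inr b)).card := by
  have h : (Finset.univ.filter p)
      = (Finset.univ.filter fun a => p (Sum.inl a)).disjSum
          (Finset.univ.filter fun b => p (Sum.inr b)) := by
    ext x
    cases x <;> simp [Finset.inl_mem_disjSum, Finset.inr_mem_disjSum]
  rw [h, Finset.card_disjSum]

lemma hammingDist_sum (f g : α ⊕ β → ℕ) :
    hammingDist f g
      = hammingDist (f ∘ Sum.inl) (g ∘ Sum.inl) + hammingDist (f ∘ Sum.inr) (g ∘ Sum.inr) := by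
  simpa [hammingDist] using filter_sum_card (fun i => f i ≠ g i)

lemma hammingNorm_sum (f : α ⊕ β → ℕ) :
    hammingNorm f = hammingNorm (f ∘ Sum.inl) + hammingNorm (f ∘ Sum.inr) := by
  simpa [hammingNorm] using filter_sum_card (fun i => f i ≠ 0)

/-- If a word `c` of larger weight is at distance exactly `‖c‖ - ‖x‖` from `x`,
then `c` agrees with `x` on the support of `x`. -/
lemma cover_of_dist {ι : Type*} [Fintype ι] [DecidableEq ι] {x c : ι → ℕ}
    (h : hammingDist x c + hammingNorm x = hammingNorm c) :
    ∀ i, x i ≠ 0 → c i = x i := by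
  classical
  set D := Finset.univ.filter fun i => x i ≠ c i with hD
  set Sx := Finset.univ.filter fun i => x i ≠ 0 with hSx
  set Sc := Finset.univ.filter fun i => c i ≠ 0 with hSc
  have hdist : hammingDist x c = D.card := rfl
  have hnx : hammingNorm x = Sx.card := rfl
  have hnc : hammingNorm c = Sc.card := rfl
  have hsub : (Sc \ Sx) ∪ (Sx ∩ D) ⊆ D := by
    intro i hi
    rcases Finset.mem_union.1 hi with hi | hi
    · rcases Finset.mem_sdiff.1 hi with ⟨h1, h2⟩
      simp only [hSc, Finset.mem_filter] at h1
      simp only [hSx, Finset.mem_filter] at h2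
      have hx0 : x i = 0 := by by_contra hx; exact h2 ⟨Finset.mem_univ i, hx⟩
      simp only [hD, Finset.mem_filter]
      exact ⟨Finset.mem_univ i, by rw [hx0]; exact fun e => h1.2 e.symm⟩
    · exact (Finset.mem_inter.1 hi).2
  have hdisj : Disjoint (Sc \ Sx) (Sx ∩ D) := by
    refine Finset.disjoint_left.2 fun i hi hi' => ?_
    exact (Finset.mem_sdiff.1 hi).2 (Finset.mem_inter.1 hi').1
  have hcard : (Sc \ Sx).card + (Sx ∩ D).card ≤ D.card := by
    rw [← Finset.card_union_of_disjoint hdisj]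
    exact Finset.card_le_card hsub
  have hge : Sc.card - Sx.card ≤ (Sc \ Sx).card := Finset.le_card_sdiff _ _
  have hzero : (Sx ∩ D).card = 0 := by omega
  intro i hxi
  by_contra hne
  have : i ∈ Sx ∩ D := by
    simp only [hSx, hD, Finset.mem_inter, Finset.mem_filter]
    exact ⟨⟨Finset.mem_univ i, hxi⟩, ⟨Finset.mem_univ i, fun e => hne e.symm⟩⟩
  simp [Finset.card_eq_zero.1 hzero] at this

end Aux

theorem stmt13 {n : ℕ} (q : Fin n → ℕ) (hq : ∀ i, 2 ≤ q i) (qq t k : ℕ)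
    (ht : 2 ≤ t) (htk : t ≤ k) (hqq : 2 ≤ qq)
    (h : ∃ L : Set (Set (Fin n ⊕ Unit → ℕ)),
        IsLargeSet (Sum.elim q fun _ => qq) t k L) :
    ∃ L' : Set (Set (Fin n → ℕ)), IsLargeSet q (t - 1) (k - 1) L' := by
  classical
  obtain ⟨L, hSt, hPD, hUn⟩ := h
  -- extension map
  set e : (Fin n → ℕ) → (Fin n ⊕ Unit → ℕ) := fun y => Sum.elim y (fun _ => 1) with he
  have he_inj : Function.Injective e := by
    intro a b hab
    funext i
    exact congrFun hab (Sum.inl i)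
  have h1 : hammingNorm (fun _ : Unit => (1:ℕ)) = 1 := by decide
  have he_norm : ∀ y, hammingNorm (e y) = hammingNorm y + 1 := by
    intro y
    refine (hammingNorm_sum (e y)).trans ?_
    show hammingNorm y + hammingNorm (fun _ : Unit => (1:ℕ)) = hammingNorm y + 1
    rw [h1]
  have he_dist : ∀ a b, hammingDist (e a) (e b) = hammingDist a b := by
    intro a b
    refine (hammingDist_sum (e a) (e b)).trans ?_
    show hammingDist a b + hammingDist (fun _ : Unit => (1:ℕ)) (fun _ => 1) = hammingDist a b
    rw [hammingDist_self]
    omega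
  have hkt : (k - 1) - (t - 1) = k - t := by omega
  refine ⟨(fun C => e ⁻¹' C) '' L, ?_, ?_, ?_⟩
  · rintro _ ⟨C, hC, rfl⟩
    obtain ⟨hC1, hC2, hC3⟩ := hSt C hC
    refine ⟨?_, ?_, ?_⟩
    · intro y hy
      obtain ⟨hlt, hnorm⟩ := hC1 (e y) hy
      constructor
      · intro i; exact hlt (Sum.inl i)
      · have := he_norm y; omega
    · intro x hx hxn
      have hex_lt : ∀ i, e x i < Sum.elim q (fun _ => qq) i := by
        intro i; cases i with
        | inl a => exact hx a
        | inr b => simpa [he] using (show 1 < qq by omega)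
      have hex_n : hammingNorm (e x) = t := by rw [he_norm, hxn]; omega
      obtain ⟨c, ⟨hcC, hcd⟩, huniq⟩ := hC2 (e x) hex_lt hex_n
      -- c agrees with e x on support; in particular c (inr ()) = 1
      have hcn : hammingNorm c = k := (hC1 c hcC).2
      have hcov : ∀ i, e x i ≠ 0 → c i = e x i := by
        apply cover_of_dist
        rw [hcd, hex_n, hcn]; omega
      have hcr : c (Sum.inr ()) = 1 := hcov (Sum.inr ()) (by simp [he])
      have hce : e (c ∘ Sum.inl) = c := by
        funext i; cases i with
        | inl a => rfl
        | inr b => cases b; simpa [he] using hcr.symm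
      refine ⟨c ∘ Sum.inl, ⟨?_, ?_⟩, ?_⟩
      · show e (c ∘ Sum.inl) ∈ C
        rw [hce]; exact hcC
      · have := he_dist x (c ∘ Sum.inl)
        rw [hce] at this
        rw [hkt, ← this, hcd]
      · rintro y ⟨hyC, hyd⟩
        have : e y = c := by
          apply huniq
          refine ⟨hyC, ?_⟩
          rw [he_dist, hyd, hkt]
        funext i
        exact congrFun this (Sum.inl i)
    · intro c hc c' hc' hne
      have : 2 * (k - t) + 1 ≤ hammingDist (e c) (e c') :=
        hC3 (e c) hc (e c') hc' (fun h' => hne (he_inj h'))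
      rw [he_dist] at this
      omega
  · rintro _ ⟨C, hC, rfl⟩ _ ⟨C', hC', rfl⟩ hne
    have hCC' : C ≠ C' := by rintro rfl; exact hne rfl
    have := hPD hC hC' hCC'
    exact Disjoint.preimage e (this : Disjoint C C')
  · ext y
    simp only [Set.mem_sUnion, Set.mem_image, Set.mem_setOf_eq]
    constructor
    · rintro ⟨_, ⟨C, hC, rfl⟩, hy⟩
      obtain ⟨hC1, _, _⟩ := hSt C hC
      obtain ⟨hlt, hnorm⟩ := hC1 (e y) hy
      refine ⟨fun i => hlt (Sum.inl i), ?_⟩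
      have := he_norm y; omega
    · rintro ⟨hlt, hnorm⟩
      have : e y ∈ ⋃₀ L := by
        rw [hUn]
        refine ⟨?_, ?_⟩
        · intro i; cases i with
          | inl a => exact hlt a
          | inr b => simpa [he] using (show 1 < qq by omega)
        · rw [he_norm, hnorm]; omega
      obtain ⟨C, hC, hyC⟩ := this
      exact ⟨e ⁻¹' C, ⟨C, hC, rfl⟩, hyC⟩
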